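/- Let g = gcd(a₁, a₂) = a_{k+1} and L = lcm(a₂, …, a_{k+1}). Then the total number of recursive calls over one full period satisfies Σ_{c=1}^{L} R(c) ≤ Σ_{i=1}^{k} i·(L/a_{i+1}) + (k+1)·(L − L/g); equivalently, the average of R over c ∈ {1, …, L} is at most Σ_{i=1}^{k} i/a_{i+1} + (k+1)·(g−1)/g. -/

import Mathlib

open scoped Classical

/-- The number of recursive calls made by the DEA-R algorithm on input `(a 1, a 2, c)`,
where `a 1, a 2, …, a (k+2)` is the Euclidean remainder sequence:
the least `i ∈ {1,…,k}` with `a (i+1) ∣ (c - a i)` if one exists, and `k+1` otherwise. -/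
noncomputable def DEA_R (a : ℕ → ℕ) (k : ℕ) (c : ℤ) : ℕ :=
  if ∃ i, 1 ≤ i ∧ i ≤ k ∧ (a (i + 1) : ℤ) ∣ (c - (a i : ℤ))
  then sInf {i | 1 ≤ i ∧ i ≤ k ∧ (a (i + 1) : ℤ) ∣ (c - (a i : ℤ))}
  else k + 1

lemma DEA_R_mem (a : ℕ → ℕ) (k : ℕ) (c : ℤ) :
    1 ≤ DEA_R a k c ∧ DEA_R a k c ≤ k + 1 := by
  unfold DEA_R
  split
  · next h =>
    have := Nat.sInf_mem (h : {i | 1 ≤ i ∧ i ≤ k ∧ (a (i + 1) : ℤ) ∣ (c - (a i : ℤ))}.Nonempty)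
    exact ⟨this.1, this.2.1.trans (Nat.le_succ k)⟩
  · omega

lemma DEA_R_dvd (a : ℕ → ℕ) (k : ℕ) (c : ℤ) (i : ℕ) (hik : i ≤ k)
    (h : DEA_R a k c = i) : (a (i + 1) : ℤ) ∣ (c - (a i : ℤ)) := by
  unfold DEA_R at h
  split at h
  · next hne =>
    have := Nat.sInf_mem (hne : {j | 1 ≤ j ∧ j ≤ k ∧ (a (j + 1) : ℤ) ∣ (c - (a j : ℤ))}.Nonempty)
    rw [← h]
    exact this.2.2
  · omega

lemma DEA_R_le_k (a : ℕ → ℕ) (k : ℕ) (c : ℤ)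
    (h : ∃ i, 1 ≤ i ∧ i ≤ k ∧ (a (i + 1) : ℤ) ∣ (c - (a i : ℤ))) : DEA_R a k c ≤ k := by
  unfold DEA_R
  rw [if_pos h]
  exact (Nat.sInf_mem (h : {i | 1 ≤ i ∧ i ≤ k ∧ (a (i + 1) : ℤ) ∣ (c - (a i : ℤ))}.Nonempty)).2.1

lemma card_residue (L m : ℕ) (hm : 0 < m) (hdvd : m ∣ L) (v : ℕ) :
    ((Finset.Icc 1 L).filter (fun c : ℕ => (m:ℤ) ∣ (c:ℤ) - (v:ℤ))).card = L / m := by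
  obtain ⟨q, hq⟩ := hdvd
  have hcond : ∀ c : ℕ, ((m:ℤ) ∣ (c:ℤ) - (v:ℤ)) ↔ c ≡ v [MOD m] := by
    intro c
    rw [Nat.modEq_iff_dvd]
    constructor
    · intro h; simpa using h.neg_right
    · intro h; simpa using h.neg_right
  have h1 : ((Finset.Icc 1 L).filter (fun c : ℕ => (m:ℤ) ∣ (c:ℤ) - (v:ℤ)))
      = (Finset.Ioc 0 L).filter (fun c : ℕ => c ≡ v [MOD m]) := by
    rw [show Finset.Icc 1 L = Finset.Ioc 0 L from rfl]
    exact Finset.filter_congr (fun c _ => by simp [hcond c])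
  rw [h1]
  have h2 := Nat.Ioc_filter_modEq_card 0 L hm v
  have hfloor : (⌊(((L:ℕ):ℚ) - (v:ℚ)) / (m:ℚ)⌋ - ⌊(((0:ℕ):ℚ) - (v:ℚ)) / (m:ℚ)⌋) = (q : ℤ) := by
    have hmQ : (m:ℚ) ≠ 0 := by positivity
    have : (((L:ℕ):ℚ) - (v:ℚ)) / (m:ℚ) = (q:ℚ) + (((0:ℕ):ℚ) - (v:ℚ)) / (m:ℚ) := by
      field_simp [hq]
      rw [hq]; push_cast; ring
    rw [this]
    rw [show ((q:ℚ)) = ((q:ℤ):ℚ) by push_cast; ring, Int.floor_intCast_add]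
    ring
  rw [hfloor] at h2
  rw [sup_eq_left.mpr (Int.natCast_nonneg q)] at h2
  have hLm : L / m = q := by rw [hq, Nat.mul_div_cancel_left _ hm]
  rw [hLm]; exact_mod_cast h2

lemma card_not_dvd (L g : ℕ) :
    ((Finset.Icc 1 L).filter (fun c : ℕ => ¬ g ∣ c)).card = L - L / g := by
  have h0 : ((Finset.Icc 1 L).filter (fun c : ℕ => g ∣ c)).card = L / g := by
    rw [show Finset.Icc 1 L = Finset.Ioc 0 L from rfl]
    exact Nat.Ioc_filter_dvd_card_eq_div L g
  have := Finset.card_filter_add_card_filter_not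
    (s := Finset.Icc 1 L) (p := fun c : ℕ => g ∣ c)
  rw [h0, Nat.card_Icc] at this
  omega

/-- Over one full period `{1, …, L}` with `L = lcm(a₂, …, a_{k+1})` and
`g = gcd (a 1) (a 2) = a (k+1)`, the total number of recursive calls satisfies
`Σ_{c=1}^{L} R c ≤ Σ_{i=1}^{k} i·(L / a (i+1)) + (k+1)·(L - L/g)`; equivalently the
average of `R` over `{1, …, L}` is at most `Σ_{i=1}^{k} i / a (i+1) + (k+1)·(g-1)/g`. -/
theorem DEA_R_sum_over_period_le
    (a : ℕ → ℕ) (k : ℕ) (hk : 1 ≤ k)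
    (hb : 1 ≤ a 2) (hab : a 2 < a 1)
    (hrec : ∀ i, 1 ≤ i → i ≤ k → a (i + 2) = a i % a (i + 1))
    (hpos : 0 < a (k + 1)) (hzero : a (k + 2) = 0)
    (L : ℕ) (hL : L = (Finset.Icc 2 (k + 1)).lcm a)
    :
    (∑ c ∈ Finset.Icc 1 L, DEA_R a k (c : ℤ))
        ≤ (∑ i ∈ Finset.Icc 1 k, i * (L / a (i + 1)))
          + (k + 1) * (L - L / Nat.gcd (a 1) (a 2)) ∧
    (∑ c ∈ Finset.Icc 1 L, (DEA_R a k (c : ℤ) : ℚ)) / (L : ℚ)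
        ≤ (∑ i ∈ Finset.Icc 1 k, (i : ℚ) / (a (i + 1) : ℚ))
          + ((k : ℚ) + 1) * (((Nat.gcd (a 1) (a 2) : ℚ) - 1) / (Nat.gcd (a 1) (a 2) : ℚ)) := by
  have hgpos : 0 < Nat.gcd (a 1) (a 2) := Nat.gcd_pos_of_pos_right _ hb
  have hgQ1 : (1:ℚ) ≤ (Nat.gcd (a 1) (a 2) : ℚ) := by exact_mod_cast hgpos
  have hgcd : ∀ j, j ≤ k → Nat.gcd (a 1) (a 2) = Nat.gcd (a (j+1)) (a (j+2)) := by
    intro j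
    induction j with
    | zero => intro _; rfl
    | succ n ih =>
      intro hj
      rw [ih (by omega), hrec (n+1) (by omega) (by omega)]
      rw [Nat.gcd_comm (a (n+1+1)), ← Nat.gcd_rec, Nat.gcd_comm]
  have hgk : Nat.gcd (a 1) (a 2) = a (k+1) := by
    have h := hgcd k le_rfl
    rw [hzero, Nat.gcd_zero_right] at h
    exact h
  have hakdvd : a (k+1) ∣ a k :=
    Nat.dvd_of_mod_eq_zero (by rw [← hrec k hk le_rfl]; exact hzero)
  by_cases hL0 : L = 0
  · subst hL0
    constructor
    · simp
    · have h1 : (0:ℚ) ≤ ∑ i ∈ Finset.Icc 1 k, (i:ℚ)/(a (i+1):ℚ) :=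
        Finset.sum_nonneg fun i _ => by positivity
      have h2 : (0:ℚ) ≤ ((k:ℚ)+1) * (((Nat.gcd (a 1) (a 2):ℚ) - 1)/(Nat.gcd (a 1) (a 2):ℚ)) :=
        mul_nonneg (by positivity) (div_nonneg (by linarith) (by linarith))
      simp
      linarith
  · have hLpos : 0 < L := Nat.pos_of_ne_zero hL0
    have hdvdL : ∀ i, 1 ≤ i → i ≤ k → a (i+1) ∣ L := by
      intro i h1 h2
      rw [hL]
      exact Finset.dvd_lcm (by rw [Finset.mem_Icc]; omega)
    have hposA : ∀ i, 1 ≤ i → i ≤ k → 0 < a (i+1) := by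
      intro i h1 h2
      rcases Nat.eq_zero_or_pos (a (i+1)) with h|h
      · exfalso
        have hd := hdvdL i h1 h2
        rw [h] at hd
        exact hL0 (Nat.eq_zero_of_zero_dvd hd)
      · exact h
    have hgdvdL : Nat.gcd (a 1) (a 2) ∣ L := by rw [hgk]; exact hdvdL k hk le_rfl
    have key : (∑ c ∈ Finset.Icc 1 L, DEA_R a k (c : ℤ))
        ≤ (∑ i ∈ Finset.Icc 1 k, i * (L / a (i + 1)))
          + (k + 1) * (L - L / Nat.gcd (a 1) (a 2)) := by
      have hfib : (∑ c ∈ Finset.Icc 1 L, DEA_R a k (c:ℤ))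
          = ∑ i ∈ Finset.Icc 1 (k+1),
              ∑ c ∈ (Finset.Icc 1 L).filter (fun c : ℕ => DEA_R a k (c:ℤ) = i), DEA_R a k (c:ℤ) := by
        refine (Finset.sum_fiberwise_of_maps_to ?_ _).symm
        intro c _
        have := DEA_R_mem a k (c:ℤ)
        rw [Finset.mem_Icc]
        omega
      rw [hfib]
      have hinner : ∀ i : ℕ,
          (∑ c ∈ (Finset.Icc 1 L).filter (fun c : ℕ => DEA_R a k (c:ℤ) = i), DEA_R a k (c:ℤ))
          = ((Finset.Icc 1 L).filter (fun c : ℕ => DEA_R a k (c:ℤ) = i)).card * i := by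
        intro i
        rw [Finset.sum_congr rfl (fun c hc => (Finset.mem_filter.mp hc).2),
          Finset.sum_const, smul_eq_mul]
      rw [Finset.sum_Icc_succ_top (by omega : 1 ≤ k+1)]
      have hcard : ∀ i ∈ Finset.Icc 1 k,
          ((Finset.Icc 1 L).filter (fun c : ℕ => DEA_R a k (c:ℤ) = i)).card ≤ L / a (i+1) := by
        intro i hi
        rw [Finset.mem_Icc] at hi
        rw [← card_residue L (a (i+1)) (hposA i hi.1 hi.2) (hdvdL i hi.1 hi.2) (a i)]
        apply Finset.card_le_card
        intro c hc
        rw [Finset.mem_filter] at hc ⊢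
        exact ⟨hc.1, DEA_R_dvd a k (c:ℤ) i hi.2 hc.2⟩
      have hcard2 : ((Finset.Icc 1 L).filter (fun c : ℕ => DEA_R a k (c:ℤ) = k+1)).card
          ≤ L - L / Nat.gcd (a 1) (a 2) := by
        rw [← card_not_dvd L (Nat.gcd (a 1) (a 2))]
        apply Finset.card_le_card
        intro c hc
        rw [Finset.mem_filter] at hc ⊢
        refine ⟨hc.1, fun hdvd => ?_⟩
        have h0 : a (k+1) ∣ c := by rw [← hgk]; exact hdvd
        have hgc : (a (k+1) : ℤ) ∣ (c:ℤ) - (a k : ℤ) :=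
          dvd_sub (Int.natCast_dvd_natCast.mpr h0) (Int.natCast_dvd_natCast.mpr hakdvd)
        have := DEA_R_le_k a k (c:ℤ) ⟨k, hk, le_rfl, hgc⟩
        omega
      refine add_le_add (Finset.sum_le_sum fun i hi => ?_) ?_
      · rw [hinner i]
        calc ((Finset.Icc 1 L).filter (fun c : ℕ => DEA_R a k (c:ℤ) = i)).card * i
            ≤ (L / a (i+1)) * i := Nat.mul_le_mul_right i (hcard i hi)
          _ = i * (L / a (i+1)) := Nat.mul_comm _ _
      · rw [hinner (k+1)]
        calc ((Finset.Icc 1 L).filter (fun c : ℕ => DEA_R a k (c:ℤ) = k+1)).card * (k+1)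
            ≤ (L - L / Nat.gcd (a 1) (a 2)) * (k+1) := Nat.mul_le_mul_right _ hcard2
          _ = (k+1) * (L - L / Nat.gcd (a 1) (a 2)) := Nat.mul_comm _ _
    refine ⟨key, ?_⟩
    have hLQ : (0:ℚ) < (L:ℚ) := by exact_mod_cast hLpos
    rw [div_le_iff₀ hLQ]
    have hcast : (∑ c ∈ Finset.Icc 1 L, (DEA_R a k (c:ℤ) : ℚ))
        = ((∑ c ∈ Finset.Icc 1 L, DEA_R a k (c:ℤ) : ℕ) : ℚ) := by push_cast; rfl
    rw [hcast]
    have hkey' : ((∑ c ∈ Finset.Icc 1 L, DEA_R a k (c:ℤ) : ℕ) : ℚ)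
        ≤ (((∑ i ∈ Finset.Icc 1 k, i * (L / a (i + 1)))
          + (k + 1) * (L - L / Nat.gcd (a 1) (a 2)) : ℕ) : ℚ) := by exact_mod_cast key
    refine hkey'.trans (le_of_eq ?_)
    have hA : ((∑ i ∈ Finset.Icc 1 k, i * (L / a (i+1)) : ℕ) : ℚ)
        = (∑ i ∈ Finset.Icc 1 k, (i:ℚ) / (a (i+1):ℚ)) * L := by
      push_cast
      rw [Finset.sum_mul]
      refine Finset.sum_congr rfl fun i hi => ?_
      rw [Finset.mem_Icc] at hi
      rw [Nat.cast_div (hdvdL i hi.1 hi.2) (by exact_mod_cast (hposA i hi.1 hi.2).ne')]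
      ring
    have hB : (((k+1) * (L - L / Nat.gcd (a 1) (a 2)) : ℕ) : ℚ)
        = ((k:ℚ)+1) * (((Nat.gcd (a 1) (a 2):ℚ) - 1)/(Nat.gcd (a 1) (a 2):ℚ)) * L := by
      have hdss : L / Nat.gcd (a 1) (a 2) ≤ L := Nat.div_le_self _ _
      have hgQ : (Nat.gcd (a 1) (a 2) : ℚ) ≠ 0 := by positivity
      push_cast [Nat.cast_sub hdss]
      rw [Nat.cast_div hgdvdL hgQ]
      field_simp
    rw [Nat.cast_add, hA, hB]; ring
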